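/- Let R be a commutative ring and consider W_{D_n} = R[T]/(T^{n+1}). The diagram with first map μ : W_{D_n} → W_{D_{n+1}} ⊗ W_{D_n} induced by T ↦ S ⊗ T (where W_{D_{n+1}} = R[S]/(S^{n+2})), followed by the two parallel maps W_{D_{n+1}} ⊗ W_{D_n} → W_{D_{n+1}} ⊗ W_{D_{n+1}} ⊗ W_{D_n} given by (a ⊗ b) ↦ Δ(a) ⊗ b (with Δ induced by S ↦ S_1 S_2) and (a ⊗ b) ↦ a ⊗ μ'(b) (with μ' induced by T ↦ S_2 T), is an equalizer diagram in commutative R-algebras. -/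

import Mathlib

set_option synthInstance.maxHeartbeats 1000000
set_option maxHeartbeats 1000000

/-- The Weil algebra `W_{D_n} = R[T]/(T^{n+1})`. -/
abbrev WeilDn (R : Type*) [CommRing R] (n : ℕ) : Type _ :=
  Polynomial R ⧸ Ideal.span {(Polynomial.X : Polynomial R) ^ (n + 1)}

/-- `W_{D_{n+1}} ⊗ W_{D_n}`, presented as `R[S,T]/(S^{n+2}, T^{n+1})` with
`S = X 0`, `T = X 1`. -/
abbrev WeilTwo (R : Type*) [CommRing R] (n : ℕ) : Type _ :=
  MvPolynomial (Fin 2) R ⧸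
    Ideal.span {(MvPolynomial.X 0 : MvPolynomial (Fin 2) R) ^ (n + 2),
      (MvPolynomial.X 1 : MvPolynomial (Fin 2) R) ^ (n + 1)}

/-- `W_{D_{n+1}} ⊗ W_{D_{n+1}} ⊗ W_{D_n}`, presented as
`R[S₁,S₂,T]/(S₁^{n+2}, S₂^{n+2}, T^{n+1})` with `S₁ = X 0`, `S₂ = X 1`, `T = X 2`. -/
abbrev WeilThree (R : Type*) [CommRing R] (n : ℕ) : Type _ :=
  MvPolynomial (Fin 3) R ⧸
    Ideal.span {(MvPolynomial.X 0 : MvPolynomial (Fin 3) R) ^ (n + 2),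
      (MvPolynomial.X 1 : MvPolynomial (Fin 3) R) ^ (n + 2),
      (MvPolynomial.X 2 : MvPolynomial (Fin 3) R) ^ (n + 1)}

namespace WeilAux

open MvPolynomial Finsupp

variable {R : Type*} [CommRing R]

theorem mem_span_X_pow_iff {σ : Type*} [DecidableEq σ] (e : σ → ℕ)
    (q : MvPolynomial σ R) :
    q ∈ Ideal.span (Set.range fun i => (X i : MvPolynomial σ R) ^ e i) ↔
      ∀ d : σ →₀ ℕ, (∀ i, d i < e i) → coeff d q = 0 := by
  constructor
  · intro hq
    refine Submodule.span_induction ?_ ?_ ?_ ?_ hq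
    · rintro x ⟨i, rfl⟩ d hd
      rw [coeff_X_pow, if_neg]
      intro h
      have h2 : (Finsupp.single i (e i)) i = d i := by rw [h]
      simp at h2
      have := hd i
      omega
    · intro d _; simp
    · intro x y _ _ hx hy d hd
      simp [coeff_add, hx d hd, hy d hd]
    · intro a x _ hx d hd
      rw [smul_eq_mul, coeff_mul]
      refine Finset.sum_eq_zero fun uv huv => ?_
      rw [Finset.HasAntidiagonal.mem_antidiagonal] at huv
      have : ∀ i, uv.2 i < e i := fun i => lt_of_le_of_lt
        (by rw [← huv]; simp) (hd i)
      rw [hx uv.2 this, mul_zero]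
  · intro h
    rw [q.as_sum]
    refine Ideal.sum_mem _ fun d hd => ?_
    by_cases hbd : ∀ i, d i < e i
    · rw [h d hbd]; simp
    · push_neg at hbd
      obtain ⟨i, hi⟩ := hbd
      have hle : Finsupp.single i (e i) ≤ d := Finsupp.single_le_iff.mpr hi
      have : (monomial d) (coeff d q) =
          (X i : MvPolynomial σ R) ^ e i * (monomial (d - Finsupp.single i (e i))) (coeff d q) := by
        rw [X_pow_eq_monomial, monomial_mul, one_mul, add_tsub_cancel_of_le hle]
      rw [this]
      exact Ideal.mul_mem_right _ _ (Ideal.subset_span ⟨i, rfl⟩)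

variable {R : Type*} [CommRing R]

lemma range_fin_two {α : Type*} (f : Fin 2 → α) : Set.range f = {f 0, f 1} := by
  ext x
  constructor
  · rintro ⟨i, rfl⟩; fin_cases i <;> simp
  · rintro (rfl | rfl)
    exacts [⟨0, rfl⟩, ⟨1, rfl⟩]

lemma range_fin_three {α : Type*} (f : Fin 3 → α) : Set.range f = {f 0, f 1, f 2} := by
  ext x
  constructor
  · rintro ⟨i, rfl⟩; fin_cases i <;> simp
  · rintro (rfl | rfl | rfl)
    exacts [⟨0, rfl⟩, ⟨1, rfl⟩, ⟨2, rfl⟩]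

/-- membership test for the ideal of `WeilTwo` -/
theorem mem_I2_iff (n : ℕ) (q : MvPolynomial (Fin 2) R) :
    q ∈ Ideal.span {(X 0 : MvPolynomial (Fin 2) R) ^ (n + 2), (X 1 : MvPolynomial (Fin 2) R) ^ (n + 1)} ↔
      ∀ d : Fin 2 →₀ ℕ, d 0 ≤ n + 1 → d 1 ≤ n → coeff d q = 0 := by
  have h := mem_span_X_pow_iff (R := R) (![n + 2, n + 1]) q
  rw [range_fin_two] at h
  simp only [Matrix.cons_val_zero, Matrix.cons_val_one, Matrix.head_cons] at h
  rw [h]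
  constructor
  · intro H d h0 h1
    refine H d fun i => ?_
    fin_cases i <;> simp <;> omega
  · intro H d hd
    have h0 := hd 0
    have h1 := hd 1
    simp at h0 h1
    exact H d (by omega) (by omega)

theorem mem_I3_iff (n : ℕ) (q : MvPolynomial (Fin 3) R) :
    q ∈ Ideal.span {(X 0 : MvPolynomial (Fin 3) R) ^ (n + 2), (X 1 : MvPolynomial (Fin 3) R) ^ (n + 2),
        (X 2 : MvPolynomial (Fin 3) R) ^ (n + 1)} ↔
      ∀ d : Fin 3 →₀ ℕ, d 0 ≤ n + 1 → d 1 ≤ n + 1 → d 2 ≤ n → coeff d q = 0 := by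
  have h := mem_span_X_pow_iff (R := R) (![n + 2, n + 2, n + 1]) q
  rw [range_fin_three] at h
  simp only [Matrix.cons_val_zero, Matrix.cons_val_one, Matrix.head_cons, Matrix.cons_val_two,
    Matrix.tail_cons] at h
  rw [h]
  constructor
  · intro H d h0 h1 h2
    refine H d fun i => ?_
    fin_cases i <;> simp <;> omega
  · intro H d hd
    have h0 := hd 0
    have h1 := hd 1
    have h2 := hd 2
    simp at h0 h1 h2
    exact H d (by omega) (by omega) (by omega)


noncomputable def δ2 (k : ℕ) : Fin 2 →₀ ℕ := Finsupp.single 0 k + Finsupp.single 1 k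

@[simp] lemma δ2_apply_0 (k : ℕ) : δ2 k 0 = k := by simp [δ2]
@[simp] lemma δ2_apply_1 (k : ℕ) : δ2 k 1 = k := by simp [δ2]

lemma δ2_inj {j k : ℕ} (h : δ2 j = δ2 k) : j = k := by
  have := DFunLike.congr_fun h 0
  simpa using this

lemma pow_X01 (k : ℕ) : (X 0 * X 1 : MvPolynomial (Fin 2) R) ^ k = monomial (δ2 k) 1 := by
  rw [mul_pow, X_pow_eq_monomial, X_pow_eq_monomial, monomial_mul, one_mul]
  rfl

lemma coeff_aeval_X01 (p : Polynomial R) (k : ℕ) :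
    coeff (δ2 k) (Polynomial.aeval (X 0 * X 1 : MvPolynomial (Fin 2) R) p) = p.coeff k := by
  conv_lhs => rw [p.as_sum_support]
  rw [map_sum, coeff_sum]
  have step : ∀ j ∈ p.support,
      coeff (δ2 k) (Polynomial.aeval (X 0 * X 1 : MvPolynomial (Fin 2) R)
        (Polynomial.monomial j (p.coeff j))) = if j = k then p.coeff j else 0 := by
    intro j _
    rw [Polynomial.aeval_monomial, pow_X01, algebraMap_eq, C_mul_monomial, mul_one,
      coeff_monomial]
    congr 1
    simp only [eq_iff_iff]
    exact ⟨δ2_inj, fun h => by rw [h]⟩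
  rw [Finset.sum_congr rfl step, Finset.sum_ite_eq' p.support k (fun j => p.coeff j)]
  by_cases hk : k ∈ p.support
  · rw [if_pos hk]
  · rw [if_neg hk, eq_comm, Polynomial.notMem_support_iff.mp hk]

lemma coeff_aeval_of_monomial {w : Fin 2 → MvPolynomial (Fin 3) R}
    {E : (Fin 2 →₀ ℕ) → (Fin 3 →₀ ℕ)}
    (hw : ∀ (d : Fin 2 →₀ ℕ) (a : R), aeval w (monomial d a) = monomial (E d) a)
    (q : MvPolynomial (Fin 2) R) (e : Fin 3 →₀ ℕ) :
    coeff e (aeval w q) = ∑ d ∈ q.support, if E d = e then coeff d q else 0 := by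
  conv_lhs => rw [q.as_sum]
  rw [map_sum, coeff_sum]
  exact Finset.sum_congr rfl fun d _ => by rw [hw, coeff_monomial]

noncomputable def E1 (d : Fin 2 →₀ ℕ) : Fin 3 →₀ ℕ :=
  Finsupp.single 0 (d 0) + Finsupp.single 1 (d 0) + Finsupp.single 2 (d 1)

noncomputable def E2 (d : Fin 2 →₀ ℕ) : Fin 3 →₀ ℕ :=
  Finsupp.single 0 (d 0) + (Finsupp.single 1 (d 1) + Finsupp.single 2 (d 1))

@[simp] lemma E1_apply_0 (d : Fin 2 →₀ ℕ) : E1 d 0 = d 0 := by simp [E1]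
@[simp] lemma E1_apply_1 (d : Fin 2 →₀ ℕ) : E1 d 1 = d 0 := by simp [E1]
@[simp] lemma E1_apply_2 (d : Fin 2 →₀ ℕ) : E1 d 2 = d 1 := by simp [E1]
@[simp] lemma E2_apply_0 (d : Fin 2 →₀ ℕ) : E2 d 0 = d 0 := by simp [E2]
@[simp] lemma E2_apply_1 (d : Fin 2 →₀ ℕ) : E2 d 1 = d 1 := by simp [E2]
@[simp] lemma E2_apply_2 (d : Fin 2 →₀ ℕ) : E2 d 2 = d 1 := by simp [E2]

lemma fin2_eq_of_apply {d d' : Fin 2 →₀ ℕ} (h0 : d 0 = d' 0) (h1 : d 1 = d' 1) : d = d' := by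
  ext i; fin_cases i <;> assumption

lemma aeval_w1_monomial (d : Fin 2 →₀ ℕ) (a : R) :
    aeval (![X 0 * X 1, X 2] : Fin 2 → MvPolynomial (Fin 3) R) (monomial d a)
      = monomial (E1 d) a := by
  rw [aeval_monomial, Finsupp.prod_fintype _ _ (fun i => pow_zero _), Fin.prod_univ_two]
  simp only [Matrix.cons_val_zero, Matrix.cons_val_one, Matrix.head_cons]
  rw [mul_pow, X_pow_eq_monomial, X_pow_eq_monomial, X_pow_eq_monomial, monomial_mul,
    monomial_mul, algebraMap_eq, C_mul_monomial]
  simp [E1]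

lemma aeval_w2_monomial (d : Fin 2 →₀ ℕ) (a : R) :
    aeval (![X 0, X 1 * X 2] : Fin 2 → MvPolynomial (Fin 3) R) (monomial d a)
      = monomial (E2 d) a := by
  rw [aeval_monomial, Finsupp.prod_fintype _ _ (fun i => pow_zero _), Fin.prod_univ_two]
  simp only [Matrix.cons_val_zero, Matrix.cons_val_one, Matrix.head_cons]
  rw [mul_pow, X_pow_eq_monomial, X_pow_eq_monomial, X_pow_eq_monomial, monomial_mul,
    monomial_mul, algebraMap_eq, C_mul_monomial]
  simp [E2]


lemma algHom_mk_poly {I : Ideal (Polynomial R)} {A : Type*} [CommRing A] [Algebra R A]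
    (g : (Polynomial R ⧸ I) →ₐ[R] A) (p : Polynomial R) :
    g (Ideal.Quotient.mk I p) = Polynomial.aeval (g (Ideal.Quotient.mk I Polynomial.X)) p := by
  have h : Polynomial.aeval (g (Ideal.Quotient.mk I Polynomial.X))
      = g.comp (Ideal.Quotient.mkₐ R I) := by
    apply Polynomial.algHom_ext
    simp [Ideal.Quotient.mkₐ_eq_mk]
  rw [h]
  simp [Ideal.Quotient.mkₐ_eq_mk]

lemma algHom_mk_mv {σ : Type*} {I : Ideal (MvPolynomial σ R)} {A : Type*} [CommRing A]
    [Algebra R A] (g : (MvPolynomial σ R ⧸ I) →ₐ[R] A) (q : MvPolynomial σ R) :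
    g (Ideal.Quotient.mk I q) = aeval (fun i => g (Ideal.Quotient.mk I (X i))) q := by
  have h : aeval (fun i => g (Ideal.Quotient.mk I (X i))) = g.comp (Ideal.Quotient.mkₐ R I) := by
    apply MvPolynomial.algHom_ext
    intro i
    simp [Ideal.Quotient.mkₐ_eq_mk]
  rw [h]
  simp [Ideal.Quotient.mkₐ_eq_mk]

lemma aeval_mk {σ τ : Type*} {I : Ideal (MvPolynomial τ R)} (w : σ → MvPolynomial τ R)
    (q : MvPolynomial σ R) :
    aeval (fun i => Ideal.Quotient.mk I (w i)) q = Ideal.Quotient.mk I (aeval w q) := by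
  have := AlgHom.congr_fun (comp_aeval w (Ideal.Quotient.mkₐ R I)) q
  simpa [Ideal.Quotient.mkₐ_eq_mk] using this.symm

end WeilAux

open MvPolynomial

/-- Lemma 5.1.1: the diagram
`W_{D_n} → W_{D_{n+1}} ⊗ W_{D_n} ⇉ W_{D_{n+1}} ⊗ W_{D_{n+1}} ⊗ W_{D_n}`,
where `μ` is induced by `T ↦ S·T`, and the parallel maps are induced by
`S ↦ S₁S₂, T ↦ T` and by `S ↦ S₁, T ↦ S₂·T`, is an equalizer diagram of commutative
`R`-algebras: `μ` is injective and its range is exactly where the two parallel maps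
agree. -/
theorem weilDn_mult_equalizer {R : Type*} [CommRing R] (n : ℕ)
    (μ : WeilDn R n →ₐ[R] WeilTwo R n)
    (hμ : μ (Ideal.Quotient.mk _ (Polynomial.X : Polynomial R)) =
      Ideal.Quotient.mk _ (MvPolynomial.X 0 * MvPolynomial.X 1 : MvPolynomial (Fin 2) R))
    (f₁ : WeilTwo R n →ₐ[R] WeilThree R n)
    (hf₁S : f₁ (Ideal.Quotient.mk _ (MvPolynomial.X 0 : MvPolynomial (Fin 2) R)) =
      Ideal.Quotient.mk _ (MvPolynomial.X 0 * MvPolynomial.X 1 : MvPolynomial (Fin 3) R))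
    (hf₁T : f₁ (Ideal.Quotient.mk _ (MvPolynomial.X 1 : MvPolynomial (Fin 2) R)) =
      Ideal.Quotient.mk _ (MvPolynomial.X 2 : MvPolynomial (Fin 3) R))
    (f₂ : WeilTwo R n →ₐ[R] WeilThree R n)
    (hf₂S : f₂ (Ideal.Quotient.mk _ (MvPolynomial.X 0 : MvPolynomial (Fin 2) R)) =
      Ideal.Quotient.mk _ (MvPolynomial.X 0 : MvPolynomial (Fin 3) R))
    (hf₂T : f₂ (Ideal.Quotient.mk _ (MvPolynomial.X 1 : MvPolynomial (Fin 2) R)) =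
      Ideal.Quotient.mk _ (MvPolynomial.X 1 * MvPolynomial.X 2 : MvPolynomial (Fin 3) R)) :
    Function.Injective μ ∧ ∀ b : WeilTwo R n, f₁ b = f₂ b ↔ b ∈ μ.range := by
  classical
  open WeilAux in
  -- the substitutions
  set w₁ : Fin 2 → MvPolynomial (Fin 3) R := ![X 0 * X 1, X 2] with hw₁def
  set w₂ : Fin 2 → MvPolynomial (Fin 3) R := ![X 0, X 1 * X 2] with hw₂def
  -- computation of μ
  have key : ∀ pp : Polynomial R, μ (Ideal.Quotient.mk _ pp)
      = Ideal.Quotient.mk _ (Polynomial.aeval (X 0 * X 1 : MvPolynomial (Fin 2) R) pp) := by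
    intro pp
    rw [WeilAux.algHom_mk_poly μ pp, hμ]
    have := Polynomial.aeval_algHom_apply
      (Ideal.Quotient.mkₐ R (Ideal.span {(X 0 : MvPolynomial (Fin 2) R) ^ (n + 2),
        (X 1 : MvPolynomial (Fin 2) R) ^ (n + 1)}))
      (X 0 * X 1 : MvPolynomial (Fin 2) R) pp
    simpa [Ideal.Quotient.mkₐ_eq_mk] using this
  -- computation of f₁, f₂
  have keyf : ∀ (g : WeilTwo R n →ₐ[R] WeilThree R n) (w : Fin 2 → MvPolynomial (Fin 3) R),
      (∀ i, g (Ideal.Quotient.mk _ (X i)) = Ideal.Quotient.mk _ (w i)) →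
      ∀ qq : MvPolynomial (Fin 2) R,
        g (Ideal.Quotient.mk _ qq) = Ideal.Quotient.mk _ (aeval w qq) := by
    intro g w hg qq
    rw [WeilAux.algHom_mk_mv g qq]
    have hfun : (fun i => g (Ideal.Quotient.mk _ (X i)))
        = fun i => Ideal.Quotient.mk _ (w i) := funext hg
    rw [hfun, WeilAux.aeval_mk]
  have hg1 : ∀ i, f₁ (Ideal.Quotient.mk _ (X i)) = Ideal.Quotient.mk _ (w₁ i) := by
    intro i
    fin_cases i
    · simpa [hw₁def] using hf₁S
    · simpa [hw₁def] using hf₁T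
  have hg2 : ∀ i, f₂ (Ideal.Quotient.mk _ (X i)) = Ideal.Quotient.mk _ (w₂ i) := by
    intro i
    fin_cases i
    · simpa [hw₂def] using hf₂S
    · simpa [hw₂def] using hf₂T
  constructor
  · -- injectivity
    rw [injective_iff_map_eq_zero]
    intro x hx
    obtain ⟨p, rfl⟩ := Ideal.Quotient.mk_surjective x
    rw [key p, Ideal.Quotient.eq_zero_iff_mem, WeilAux.mem_I2_iff] at hx
    rw [Ideal.Quotient.eq_zero_iff_mem, Ideal.mem_span_singleton]
    rw [Polynomial.X_pow_dvd_iff]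
    intro k hk
    have := hx (WeilAux.δ2 k) (by simp; omega) (by simp; omega)
    rwa [WeilAux.coeff_aeval_X01] at this
  · intro b
    obtain ⟨q, rfl⟩ := Ideal.Quotient.mk_surjective b
    constructor
    · intro h
      rw [keyf f₁ w₁ hg1 q, keyf f₂ w₂ hg2 q, Ideal.Quotient.eq, WeilAux.mem_I3_iff] at h
      -- off-diagonal coefficients of q vanish
      have hod : ∀ d : Fin 2 →₀ ℕ, d 0 ≤ n + 1 → d 1 ≤ n → d 0 ≠ d 1 → coeff d q = 0 := by
        intro d h0 h1 hne
        have he := h (WeilAux.E1 d) (by simpa using h0) (by simp; omega) (by simpa using h1)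
        rw [hw₁def, hw₂def, coeff_sub, sub_eq_zero,
          WeilAux.coeff_aeval_of_monomial WeilAux.aeval_w1_monomial,
          WeilAux.coeff_aeval_of_monomial WeilAux.aeval_w2_monomial] at he
        have hrhs : (∑ d' ∈ q.support, if WeilAux.E2 d' = WeilAux.E1 d then coeff d' q else 0)
            = 0 := by
          refine Finset.sum_eq_zero fun d' _ => ?_
          rw [if_neg]
          intro hEq
          have h1' := DFunLike.congr_fun hEq 1
          have h2' := DFunLike.congr_fun hEq 2
          simp at h1' h2'
          exact hne (by omega)
        have hlhs : (∑ d' ∈ q.support, if WeilAux.E1 d' = WeilAux.E1 d then coeff d' q else 0)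
            = ∑ d' ∈ q.support, if d' = d then coeff d' q else 0 := by
          refine Finset.sum_congr rfl fun d' _ => ?_
          congr 1
          simp only [eq_iff_iff]
          constructor
          · intro hEq
            refine WeilAux.fin2_eq_of_apply ?_ ?_
            · have := DFunLike.congr_fun hEq 0; simpa using this
            · have := DFunLike.congr_fun hEq 2; simpa using this
          · intro hEq; rw [hEq]
        rw [hlhs, hrhs, Finset.sum_ite_eq' q.support d (fun d' => coeff d' q)] at he
        by_cases hmem : d ∈ q.support
        · rwa [if_pos hmem] at he
        · exact MvPolynomial.notMem_support_iff.mp hmem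
      -- the preimage polynomial
      set p : Polynomial R :=
        ∑ k ∈ Finset.range (n + 1), Polynomial.monomial k (coeff (WeilAux.δ2 k) q) with hpdef
      rw [AlgHom.mem_range]
      refine ⟨Ideal.Quotient.mk _ p, ?_⟩
      rw [key p, Ideal.Quotient.eq, WeilAux.mem_I2_iff]
      intro d h0 h1
      rw [coeff_sub, sub_eq_zero]
      have hL : coeff d (Polynomial.aeval (X 0 * X 1 : MvPolynomial (Fin 2) R) p)
          = ∑ k ∈ Finset.range (n + 1), if WeilAux.δ2 k = d then coeff (WeilAux.δ2 k) q else 0 := by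
        rw [hpdef, map_sum, coeff_sum]
        refine Finset.sum_congr rfl fun k _ => ?_
        rw [Polynomial.aeval_monomial, WeilAux.pow_X01, algebraMap_eq, C_mul_monomial, mul_one,
          coeff_monomial]
      rw [hL]
      by_cases hdd : d 0 = d 1
      · have hd : d = WeilAux.δ2 (d 0) := by
          refine WeilAux.fin2_eq_of_apply ?_ ?_ <;> simp [hdd]
        have hsum : (∑ k ∈ Finset.range (n + 1),
            if WeilAux.δ2 k = d then coeff (WeilAux.δ2 k) q else 0)
            = ∑ k ∈ Finset.range (n + 1), if k = d 0 then coeff (WeilAux.δ2 k) q else 0 := by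
          refine Finset.sum_congr rfl fun k _ => ?_
          congr 1
          simp only [eq_iff_iff]
          constructor
          · intro hEq
            have := DFunLike.congr_fun hEq 0
            simpa using this
          · intro hEq
            rw [hEq]
            exact hd.symm
        rw [hsum, Finset.sum_ite_eq' (Finset.range (n + 1)) (d 0)
          (fun k => coeff (WeilAux.δ2 k) q)]
        rw [if_pos (Finset.mem_range.mpr (by omega)), ← hd]
      · rw [Finset.sum_eq_zero, eq_comm]
        · exact hod d h0 h1 hdd
        · intro k _
          rw [if_neg]
          intro hEq
          have e0 := DFunLike.congr_fun hEq 0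
          have e1 := DFunLike.congr_fun hEq 1
          simp at e0 e1
          exact hdd (by omega)
    · intro hb
      rw [AlgHom.mem_range] at hb
      obtain ⟨x, hx⟩ := hb
      obtain ⟨p, rfl⟩ := Ideal.Quotient.mk_surjective x
      rw [← hx, key p, keyf f₁ w₁ hg1, keyf f₂ w₂ hg2, hw₁def, hw₂def]
      have e1 : aeval (![X 0 * X 1, X 2] : Fin 2 → MvPolynomial (Fin 3) R)
          (Polynomial.aeval (X 0 * X 1 : MvPolynomial (Fin 2) R) p)
          = Polynomial.aeval (X 0 * X 1 * X 2 : MvPolynomial (Fin 3) R) p := by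
        rw [← Polynomial.aeval_algHom_apply]
        simp
      have e2 : aeval (![X 0, X 1 * X 2] : Fin 2 → MvPolynomial (Fin 3) R)
          (Polynomial.aeval (X 0 * X 1 : MvPolynomial (Fin 2) R) p)
          = Polynomial.aeval (X 0 * (X 1 * X 2) : MvPolynomial (Fin 3) R) p := by
        rw [← Polynomial.aeval_algHom_apply]
        simp
      rw [e1, e2, mul_assoc]
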